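/- arXiv:2604.02909 — 2 statements merged into one kernel-verified Lean document; each statement's English description precedes it below -/
import Mathlib

section
/- Let E₁, E₂ be C¹, strictly increasing, strictly concave on [0,∞) with E₁(0) = E₂(0) = 0 and E₁'(0)·E₂'(0) = 1. Then the concave continuation F (with F(x) = E₁(x) for x ≥ 0 and F(x) = −E₂^{-1}(−x) for x < 0) is strictly increasing and concave on its full domain (−R, ∞), where R = sup range E₂. -/
open Set Filter

private lemma tangent_bound (f : ℝ → ℝ)
    (hC1 : ContDiffOn ℝ 1 f (Set.Ici 0))
    (hconc : ConcaveOn ℝ (Set.Ici 0) f)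
    (h0 : f 0 = 0) {t : ℝ} (ht : 0 < t) :
    f t ≤ derivWithin f (Set.Ici 0) 0 * t := by
  set d := derivWithin f (Set.Ici 0) 0 with hd
  have hdiff : DifferentiableWithinAt ℝ f (Set.Ici 0) 0 :=
    (hC1.differentiableOn one_ne_zero) 0 Set.self_mem_Ici
  have hder : HasDerivWithinAt f d (Set.Ici 0) 0 := hdiff.hasDerivWithinAt
  rw [hasDerivWithinAt_iff_tendsto_slope] at hder
  have hIci : Set.Ici (0:ℝ) \ {0} = Set.Ioi 0 := by
    ext s
    simp only [Set.mem_diff, Set.mem_Ici, Set.mem_singleton_iff, Set.mem_Ioi]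
    constructor
    · rintro ⟨h1, h2⟩; exact lt_of_le_of_ne h1 (Ne.symm h2)
    · intro h; exact ⟨le_of_lt h, ne_of_gt h⟩
  rw [hIci] at hder
  have hslope : ∀ s ∈ Set.Ioo (0:ℝ) t, f t / t ≤ slope f 0 s := by
    intro s hs
    have hcomb := hconc.2 Set.self_mem_Ici (Set.mem_Ici.mpr ht.le)
      (show (0:ℝ) ≤ 1 - s/t by
        have : s/t ≤ 1 := (div_le_one ht).mpr hs.2.le
        linarith)
      (show (0:ℝ) ≤ s/t from div_nonneg hs.1.le ht.le)
      (by ring)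
    simp only [smul_eq_mul, mul_zero, h0, zero_add, mul_zero] at hcomb
    have harg : s/t * t = s := div_mul_cancel₀ s ht.ne'
    rw [harg] at hcomb
    rw [slope_def_field]
    simp only [h0, sub_zero]
    rw [div_le_div_iff₀ ht hs.1]
    have := mul_le_mul_of_nonneg_left hcomb ht.le
    calc f t * s = t * (s/t * f t) := by field_simp
      _ ≤ t * f s := this
      _ = f s * t := by ring
  have hev : ∀ᶠ s in nhdsWithin (0:ℝ) (Set.Ioi 0), f t / t ≤ slope f 0 s :=
    Filter.eventually_of_mem (Ioo_mem_nhdsGT_of_mem ⟨le_refl 0, ht⟩) hslope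
  have : f t / t ≤ d := ge_of_tendsto hder hev
  rw [div_le_iff₀ ht] at this
  linarith [this]

/-- The concave continuation `F` (with `F(x) = E₁(x)` for `x ≥ 0` and
`F(x) = −E₂⁻¹(−x)` for `x < 0`) is strictly increasing and concave on its full domain
`(−R, ∞)`, where `R = sup (range of E₂ on [0,∞))`. -/
theorem concave_continuation_strictMono_concave
    (E₁ E₂ E₂inv F : ℝ → ℝ)
    (hC1₁ : ContDiffOn ℝ 1 E₁ (Set.Ici 0))
    (hC1₂ : ContDiffOn ℝ 1 E₂ (Set.Ici 0))
    (hmono₁ : StrictMonoOn E₁ (Set.Ici 0))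
    (hmono₂ : StrictMonoOn E₂ (Set.Ici 0))
    (hconc₁ : StrictConcaveOn ℝ (Set.Ici 0) E₁)
    (hconc₂ : StrictConcaveOn ℝ (Set.Ici 0) E₂)
    (hnn₁ : ∀ x ∈ Set.Ici (0 : ℝ), 0 ≤ E₁ x)
    (hnn₂ : ∀ x ∈ Set.Ici (0 : ℝ), 0 ≤ E₂ x)
    (h₁0 : E₁ 0 = 0) (h₂0 : E₂ 0 = 0)
    (hnum : derivWithin E₁ (Set.Ici 0) 0 * derivWithin E₂ (Set.Ici 0) 0 = 1)
    (hinv_left : ∀ y ∈ Set.Ici (0 : ℝ), E₂inv (E₂ y) = y)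
    (hinv_mem : ∀ x ∈ E₂ '' Set.Ici (0 : ℝ), E₂inv x ∈ Set.Ici (0 : ℝ))
    (hF : ∀ x, F x = if 0 ≤ x then E₁ x else -E₂inv (-x))
    (R : ℝ) (hR : R = sSup (E₂ '' Set.Ici 0)) :
    StrictMonoOn F (Set.Ioi (-R)) ∧ ConcaveOn ℝ (Set.Ioi (-R)) F := by
  -- basic continuity and order-connectedness of the image
  have hcont₂ : ContinuousOn E₂ (Set.Ici 0) := hC1₂.continuousOn
  have hSord : (E₂ '' Set.Ici 0).OrdConnected :=
    ((isPreconnected_Ici.image _ hcont₂)).ordConnected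
  have h0S : (0:ℝ) ∈ E₂ '' Set.Ici 0 := ⟨0, Set.self_mem_Ici, h₂0⟩
  have hsurj : ∀ w : ℝ, 0 ≤ w → w < R → w ∈ E₂ '' Set.Ici 0 := by
    intro w hw hwR
    obtain ⟨s, hs, hws⟩ := exists_lt_of_lt_csSup ⟨0, h0S⟩ (hR ▸ hwR)
    exact hSord.out h0S hs ⟨hw, hws.le⟩
  have hkey : ∀ w : ℝ, 0 ≤ w → w < R → E₂inv w ∈ Set.Ici 0 ∧ E₂ (E₂inv w) = w := by
    intro w hw hwR
    obtain ⟨t, ht, hEt⟩ := hsurj w hw hwR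
    have heq : E₂inv w = t := by rw [← hEt, hinv_left t ht]
    rw [heq]; exact ⟨ht, hEt⟩
  have hF0 : F 0 = 0 := by rw [hF]; simp [h₁0]
  have hFpos : ∀ x : ℝ, 0 ≤ x → F x = E₁ x := fun x hx => by rw [hF, if_pos hx]
  have hFneg : ∀ x : ℝ, x < 0 → F x = -E₂inv (-x) := fun x hx => by
    rw [hF, if_neg (not_le.mpr hx)]
  have hinv0 : E₂inv 0 = 0 := by
    have := hinv_left 0 Set.self_mem_Ici; rwa [h₂0] at this
  have hFneg' : ∀ x : ℝ, x ≤ 0 → F x = -E₂inv (-x) := by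
    intro x hx
    rcases lt_or_eq_of_le hx with h | h
    · exact hFneg x h
    · rw [h, hF0, neg_zero, hinv0, neg_zero]
  -- facts about E₂inv on negatives
  have hzfacts : ∀ x : ℝ, -R < x → x < 0 →
      0 < E₂inv (-x) ∧ E₂ (E₂inv (-x)) = -x := by
    intro x hxR hx0
    obtain ⟨hz0, hEz⟩ := hkey (-x) (by linarith) (by linarith)
    refine ⟨?_, hEz⟩
    rcases lt_or_eq_of_le (Set.mem_Ici.mp hz0) with h | h
    · exact h
    · exfalso
      rw [← h, h₂0] at hEz
      linarith
  -- derivatives at 0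
  set d₁ := derivWithin E₁ (Set.Ici 0) 0 with hd₁
  set d₂ := derivWithin E₂ (Set.Ici 0) 0 with hd₂
  have htan₁ : ∀ t : ℝ, 0 < t → E₁ t ≤ d₁ * t :=
    fun t ht => tangent_bound E₁ hC1₁ hconc₁.concaveOn h₁0 ht
  have htan₂ : ∀ t : ℝ, 0 < t → E₂ t ≤ d₂ * t :=
    fun t ht => tangent_bound E₂ hC1₂ hconc₂.concaveOn h₂0 ht
  have hd2pos : 0 < d₂ := by
    have h1 := htan₂ 1 one_pos
    have h2 : 0 < E₂ 1 := by
      have := hmono₂ Set.self_mem_Ici (Set.mem_Ici.mpr zero_le_one) one_pos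
      rwa [h₂0] at this
    linarith
  have hd1pos : 0 < d₁ := by nlinarith [hnum]
  -- the key cross-zero slope inequality
  have hslope : ∀ x : ℝ, -R < x → x < 0 → ∀ y : ℝ, 0 < y → y * F x ≤ x * F y := by
    intro x hxR hx0 y hy
    obtain ⟨hzpos, hEz⟩ := hzfacts x hxR hx0
    set z := E₂inv (-x) with hz
    have h1 : E₁ y ≤ d₁ * y := htan₁ y hy
    have h2 : E₂ z ≤ d₂ * z := htan₂ z hzpos
    have hFy : 0 ≤ E₁ y := hnn₁ y hy.le
    have hEznn : 0 ≤ E₂ z := hnn₂ z hzpos.le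
    rw [hFneg x hx0, hFpos y hy.le, ← hz]
    have hx : x = -E₂ z := by rw [hEz, neg_neg]
    rw [hx]
    have key : E₂ z * E₁ y ≤ (d₂ * z) * (d₁ * y) := mul_le_mul h2 h1 hFy (by positivity)
    have key2 : (d₂ * z) * (d₁ * y) = z * y := by
      have h : (d₂ * z) * (d₁ * y) = (d₁ * d₂) * (z * y) := by ring
      rw [h, hnum, one_mul]
    nlinarith [key, key2]
  -- concavity on the left piece
  have hCL : ∀ x : ℝ, -R < x → x ≤ 0 → ∀ y : ℝ, -R < y → y ≤ 0 →
      ∀ a b : ℝ, 0 ≤ a → 0 ≤ b → a + b = 1 →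
      a * F x + b * F y ≤ F (a * x + b * y) := by
    intro x hxR hx0 y hyR hy0 a b ha hb hab
    have hxx : a * x + b * x = x := by rw [← add_mul, hab, one_mul]
    have hyy : a * y + b * y = y := by rw [← add_mul, hab, one_mul]
    have hmR : -R < a * x + b * y := by
      rcases le_total x y with h | h
      · nlinarith [mul_nonneg hb (sub_nonneg.mpr h)]
      · nlinarith [mul_nonneg ha (sub_nonneg.mpr h)]
    have hm0 : a * x + b * y ≤ 0 := by
      have h1 := mul_nonneg ha (neg_nonneg.mpr hx0)
      have h2 := mul_nonneg hb (neg_nonneg.mpr hy0)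
      nlinarith
    obtain ⟨hp0, hEp⟩ := hkey (-x) (by linarith) (by linarith)
    obtain ⟨hq0, hEq⟩ := hkey (-y) (by linarith) (by linarith)
    obtain ⟨hr0, hEr⟩ := hkey (-(a * x + b * y)) (by linarith) (by linarith)
    rw [hFneg' x hx0, hFneg' y hy0, hFneg' _ hm0]
    have hcomb := hconc₂.concaveOn.2 hp0 hq0 ha hb hab
    simp only [smul_eq_mul] at hcomb
    rw [hEp, hEq] at hcomb
    have hE : E₂ (E₂inv (-(a * x + b * y))) ≤ E₂ (a * E₂inv (-x) + b * E₂inv (-y)) := by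
      rw [hEr]; linarith
    have hle : E₂inv (-(a * x + b * y)) ≤ a * E₂inv (-x) + b * E₂inv (-y) := by
      by_contra hcon
      push_neg at hcon
      have hmem : a * E₂inv (-x) + b * E₂inv (-y) ∈ Set.Ici (0:ℝ) :=
        Set.mem_Ici.mpr (add_nonneg (mul_nonneg ha (Set.mem_Ici.mp hp0))
          (mul_nonneg hb (Set.mem_Ici.mp hq0)))
      have := hmono₂ hmem hr0 hcon
      linarith
    nlinarith [hle]
  -- concavity on the right piece
  have hCR : ∀ x : ℝ, 0 ≤ x → ∀ y : ℝ, 0 ≤ y → ∀ a b : ℝ, 0 ≤ a → 0 ≤ b → a + b = 1 →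
      a * F x + b * F y ≤ F (a * x + b * y) := by
    intro x hx y hy a b ha hb hab
    rw [hFpos x hx, hFpos y hy,
      hFpos _ (add_nonneg (mul_nonneg ha hx) (mul_nonneg hb hy))]
    have := hconc₁.concaveOn.2 (Set.mem_Ici.mpr hx) (Set.mem_Ici.mpr hy) ha hb hab
    simpa using this
  -- mixed case
  have hmix : ∀ x : ℝ, -R < x → x < 0 → ∀ y : ℝ, 0 < y → ∀ a b : ℝ,
      0 ≤ a → 0 ≤ b → a + b = 1 → a * F x + b * F y ≤ F (a * x + b * y) := by
    intro x hxR hx0 y hy a b ha hb hab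
    have hs := hslope x hxR hx0 y hy
    rcases le_or_gt 0 (a * x + b * y) with hm0 | hm0
    · -- nonnegative combination point
      have hmy : a * x + b * y ≤ y := by
        have h1 := mul_nonneg ha (neg_nonneg.mpr hx0.le)
        have h2 := mul_nonneg ha hy.le
        nlinarith
      have hb' : (a * x + b * y) / y ≤ 1 := (div_le_one hy).mpr hmy
      have ha' : 0 ≤ (a * x + b * y) / y := div_nonneg hm0 hy.le
      have h1 := hCR 0 le_rfl y hy.le (1 - (a * x + b * y)/y) ((a * x + b * y)/y)
        (by linarith) ha' (by ring)
      rw [hF0] at h1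
      have harg : (1 - (a * x + b * y)/y) * 0 + (a * x + b * y)/y * y = a * x + b * y := by
        rw [mul_zero, zero_add, div_mul_cancel₀ _ (ne_of_gt hy)]
      rw [harg] at h1
      have h1' : (a * x + b * y)/y * F y ≤ F (a * x + b * y) := by linarith
      have h2 : (a * x + b * y) * F y ≤ y * F (a * x + b * y) := by
        have hm := mul_le_mul_of_nonneg_left h1' hy.le
        calc (a * x + b * y) * F y = y * ((a * x + b * y)/y * F y) := by
              rw [show y * ((a * x + b * y)/y * F y) = (a * x + b * y)/y * y * F y from by ring,
                div_mul_cancel₀ _ (ne_of_gt hy)]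
          _ ≤ y * F (a * x + b * y) := hm
      have h3 : a * (y * F x) ≤ a * (x * F y) := mul_le_mul_of_nonneg_left hs ha
      have h4 : y * (a * F x + b * F y) ≤ y * F (a * x + b * y) := by linarith [h3, h2]
      exact le_of_mul_le_mul_left h4 hy
    · -- negative combination point
      have hmR : -R < a * x + b * y := by
        have h1 := mul_nonneg hb hy.le
        have h2 := mul_nonneg (show (0:ℝ) ≤ 1 - a by linarith) (neg_nonneg.mpr hx0.le)
        nlinarith
      have hxm : x ≤ a * x + b * y := by
        have h1 := mul_nonneg hb hy.le
        have h2 := mul_nonneg (show (0:ℝ) ≤ 1 - a by linarith) (neg_nonneg.mpr hx0.le)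
        nlinarith
      have hc0 : 0 ≤ (a * x + b * y) / x := by
        rw [le_div_iff_of_neg hx0, zero_mul]
        exact hm0.le
      have hc1 : (a * x + b * y) / x ≤ 1 := by
        rw [div_le_iff_of_neg hx0]
        linarith
      have h1 := hCL x hxR hx0.le 0 (by linarith) le_rfl
        ((a * x + b * y)/x) (1 - (a * x + b * y)/x) hc0 (by linarith) (by ring)
      rw [hF0] at h1
      have harg : (a * x + b * y)/x * x + (1 - (a * x + b * y)/x) * 0 = a * x + b * y := by
        rw [mul_zero, add_zero, div_mul_cancel₀ _ (ne_of_lt hx0)]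
      rw [harg] at h1
      have h1' : (a * x + b * y)/x * F x ≤ F (a * x + b * y) := by linarith
      have h2 : x * F (a * x + b * y) ≤ (a * x + b * y) * F x := by
        have hm := mul_le_mul_of_nonpos_left h1' hx0.le
        calc x * F (a * x + b * y) ≤ x * ((a * x + b * y)/x * F x) := hm
          _ = (a * x + b * y) * F x := by
              rw [show x * ((a * x + b * y)/x * F x) = (a * x + b * y)/x * x * F x from by ring,
                div_mul_cancel₀ _ (ne_of_lt hx0)]
      have h3 : b * (y * F x) ≤ b * (x * F y) := mul_le_mul_of_nonneg_left hs hb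
      have h5 : x * F (a * x + b * y) ≤ x * (a * F x + b * F y) := by linarith [h2, h3]
      have h6 : (-x) * (a * F x + b * F y) ≤ (-x) * F (a * x + b * y) := by linarith [h5]
      exact le_of_mul_le_mul_left h6 (by linarith)
  constructor
  · -- strict monotonicity
    intro x hx y hy hxy
    simp only [Set.mem_Ioi] at hx hy
    rcases le_or_gt 0 x with hx0 | hx0
    · rw [hFpos x hx0, hFpos y (le_of_lt (lt_of_le_of_lt hx0 hxy))]
      exact hmono₁ (Set.mem_Ici.mpr hx0) (Set.mem_Ici.mpr (le_of_lt (lt_of_le_of_lt hx0 hxy))) hxy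
    · rcases le_or_gt 0 y with hy0 | hy0
      · obtain ⟨hzpos, _⟩ := hzfacts x hx hx0
        rw [hFneg x hx0, hFpos y hy0]
        have := hnn₁ y (Set.mem_Ici.mpr hy0)
        linarith
      · obtain ⟨hzx, hEzx⟩ := hzfacts x hx hx0
        obtain ⟨hzy, hEzy⟩ := hzfacts y hy hy0
        rw [hFneg x hx0, hFneg y hy0]
        have hlt : E₂inv (-y) < E₂inv (-x) := by
          by_contra h
          push_neg at h
          have := hmono₂.monotoneOn (Set.mem_Ici.mpr hzx.le) (Set.mem_Ici.mpr hzy.le) h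
          rw [hEzx, hEzy] at this
          linarith
        linarith
  · -- concavity
    refine ⟨convex_Ioi _, ?_⟩
    intro x hx y hy a b ha hb hab
    simp only [Set.mem_Ioi] at hx hy
    simp only [smul_eq_mul]
    rcases le_or_gt 0 x with hx0 | hx0
    · rcases le_or_gt 0 y with hy0 | hy0
      · exact hCR x hx0 y hy0 a b ha hb hab
      · rcases eq_or_lt_of_le hx0 with h | h
        · -- x = 0, y < 0 : both ≤ 0
          exact hCL x hx (h ▸ le_rfl) y hy hy0.le a b ha hb hab
        · -- y < 0 < x : mixed, swapped
          have := hmix y hy hy0 x h b a hb ha (by linarith)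
          calc a * F x + b * F y = b * F y + a * F x := by ring
            _ ≤ F (b * y + a * x) := this
            _ = F (a * x + b * y) := by ring_nf
    · rcases le_or_gt 0 y with hy0 | hy0
      · rcases eq_or_lt_of_le hy0 with h | h
        · exact hCL x hx hx0.le y hy (h ▸ le_rfl) a b ha hb hab
        · exact hmix x hx hx0 y h a b ha hb hab
      · exact hCL x hx hx0.le y hy hy0.le a b ha hb hab
end

section
/- Legitimate transfers do not decrease the objective: if E₁, E₂ are concave differentiable, P_i = 1/E_i', and a transfer of δ > 0 from pool 1 to pool 2 satisfies the legitimacy condition P₁(x₁ − δ) ≥ P₂(x₂ + δ) and initially P₁(x₁) > P₂(x₂), then E₁(x₁ − δ) + E₂(x₂ + δ) ≥ E₁(x₁) + E₂(x₂), with strict inequality if E₁, E₂ are strictly concave. -/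
/-- Legitimate transfers do not decrease the objective: if `E₁, E₂` are concave
differentiable with prices `P_i = 1/E_i'`, `P₁(x₁) > P₂(x₂)` initially, and the
transfer `δ > 0` is legitimate (`P₁(x₁ − δ) ≥ P₂(x₂ + δ)`), then
`E₁(x₁ − δ) + E₂(x₂ + δ) ≥ E₁(x₁) + E₂(x₂)`, with strict inequality when `E₁, E₂`
are strictly concave. -/
theorem legitimate_transfer_improves
    (E₁ E₂ : ℝ → ℝ)
    (hdiff₁ : Differentiable ℝ E₁) (hconc₁ : ConcaveOn ℝ Set.univ E₁)
    (hpos₁ : ∀ x, 0 < deriv E₁ x)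
    (hdiff₂ : Differentiable ℝ E₂) (hconc₂ : ConcaveOn ℝ Set.univ E₂)
    (hpos₂ : ∀ x, 0 < deriv E₂ x)
    (x₁ x₂ δ : ℝ) (hδ : 0 < δ)
    (hprice : 1 / deriv E₂ x₂ < 1 / deriv E₁ x₁)
    (hleg : 1 / deriv E₂ (x₂ + δ) ≤ 1 / deriv E₁ (x₁ - δ)) :
    E₁ x₁ + E₂ x₂ ≤ E₁ (x₁ - δ) + E₂ (x₂ + δ) ∧
    (StrictConcaveOn ℝ Set.univ E₁ → StrictConcaveOn ℝ Set.univ E₂ →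
      E₁ x₁ + E₂ x₂ < E₁ (x₁ - δ) + E₂ (x₂ + δ)) := by
  have h1 : x₁ - δ < x₁ := by linarith
  have h2 : x₂ < x₂ + δ := by linarith
  -- from legitimacy: deriv E₁ (x₁-δ) ≤ deriv E₂ (x₂+δ)
  have hd : deriv E₁ (x₁ - δ) ≤ deriv E₂ (x₂ + δ) := by
    have := hpos₁ (x₁ - δ); have := hpos₂ (x₂ + δ)
    rw [div_le_div_iff₀ (by positivity) (by positivity)] at hleg
    linarith
  have hs1 : slope E₁ (x₁ - δ) x₁ ≤ deriv E₁ (x₁ - δ) :=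
    hconc₁.slope_le_deriv (Set.mem_univ _) (Set.mem_univ _) h1 (hdiff₁ _)
  have hs2 : deriv E₂ (x₂ + δ) ≤ slope E₂ x₂ (x₂ + δ) :=
    hconc₂.deriv_le_slope (Set.mem_univ _) (Set.mem_univ _) h2 (hdiff₂ _)
  have e1 : slope E₁ (x₁ - δ) x₁ = (E₁ x₁ - E₁ (x₁ - δ)) / δ := by
    rw [slope_def_field]; ring_nf
  have e2 : slope E₂ x₂ (x₂ + δ) = (E₂ (x₂ + δ) - E₂ x₂) / δ := by
    rw [slope_def_field]; ring_nf
  rw [e1] at hs1; rw [e2] at hs2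
  rw [div_le_iff₀ hδ] at hs1
  rw [le_div_iff₀ hδ] at hs2
  constructor
  · nlinarith
  · intro hsc₁ hsc₂
    have hs1' : slope E₁ (x₁ - δ) x₁ < deriv E₁ (x₁ - δ) :=
      hsc₁.slope_lt_deriv (Set.mem_univ _) (Set.mem_univ _) h1 (hdiff₁ _)
    have hs2' : deriv E₂ (x₂ + δ) < slope E₂ x₂ (x₂ + δ) :=
      hsc₂.deriv_lt_slope (Set.mem_univ _) (Set.mem_univ _) h2 (hdiff₂ _)
    rw [e1, div_lt_iff₀ hδ] at hs1'
    rw [e2, lt_div_iff₀ hδ] at hs2'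
    nlinarith
end
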